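/- Let p ∈ ℕ, let S* be a configuration, let π be a probability mass function on the 2^p configurations with π(S) > 0 for all S, and suppose π(S*) ≥ 1 − ε for some ε ∈ (0,1). If φ̂ ∈ [0,1]^p minimizes φ ↦ KL(q_φ ∥ π) over [0,1]^p, then q_{φ̂}(S*) ≥ 1 − ε − √( (−log(1−ε)) / 2 ). -/

import Mathlib

open Finset

private lemma myH_mono : MonotoneOn (fun a : ℝ => Real.log a - Real.log (1 - a) - 4 * a)
    (Set.Ioo (0:ℝ) 1) := by
  have hderiv : ∀ x ∈ Set.Ioo (0:ℝ) 1,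
      HasDerivAt (fun a : ℝ => Real.log a - Real.log (1 - a) - 4 * a)
        (x⁻¹ + (1 - x)⁻¹ - 4) x := by
    intro x hx
    have h1 : (1:ℝ) - x ≠ 0 := by have := hx.2; intro h; linarith [h]
    have hlog : HasDerivAt Real.log x⁻¹ x := Real.hasDerivAt_log (ne_of_gt hx.1)
    have hsub : HasDerivAt (fun a : ℝ => 1 - a) (-1) x := by
      exact (hasDerivAt_id x).const_sub (1:ℝ)
    have hlog2 : HasDerivAt (fun a : ℝ => Real.log (1 - a)) ((1 - x)⁻¹ * (-1)) x :=
      (Real.hasDerivAt_log h1).comp x hsub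
    have hlin : HasDerivAt (fun a : ℝ => 4 * a) 4 x := by
      simpa using (hasDerivAt_id x).const_mul (4:ℝ)
    have := (hlog.sub hlog2).sub hlin
    exact this.congr_deriv (by ring)
  apply monotoneOn_of_deriv_nonneg (convex_Ioo 0 1)
  · intro x hx
    exact (hderiv x hx).continuousAt.continuousWithinAt
  · intro x hx
    rw [isOpen_Ioo.interior_eq] at hx
    exact (hderiv x hx).differentiableAt.differentiableWithinAt
  · intro x hx
    rw [isOpen_Ioo.interior_eq] at hx
    rw [(hderiv x hx).deriv]
    have h1 : 0 < x := hx.1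
    have h2 : 0 < 1 - x := by linarith [hx.2]
    rw [sub_nonneg]
    nlinarith [mul_inv_cancel₀ (ne_of_gt h1), mul_inv_cancel₀ (ne_of_gt h2),
      sq_nonneg (1 - 2*x), mul_pos h1 h2, inv_pos.mpr h1, inv_pos.mpr h2]

private lemma pinsker_bin {b : ℝ} (hb : b ∈ Set.Ioo (0:ℝ) 1) {a : ℝ} (ha : a ∈ Set.Icc (0:ℝ) 1) :
    2 * (a - b)^2 ≤ a * Real.log (a / b) + (1 - a) * Real.log ((1 - a) / (1 - b)) := by
  obtain ⟨hb0, hb1⟩ := hb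
  have hb1' : (0:ℝ) < 1 - b := by linarith
  set F : ℝ → ℝ := fun a => a * Real.log a - a * Real.log b + (1 - a) * Real.log (1 - a)
      - (1 - a) * Real.log (1 - b) - 2 * (a - b)^2 with hF
  set H : ℝ → ℝ := fun a => Real.log a - Real.log (1 - a) - 4 * a with hHdef
  have hFcont : Continuous F := by
    have h1 : Continuous (fun a : ℝ => a * Real.log a) := Real.continuous_mul_log
    have h2 : Continuous (fun a : ℝ => (1 - a) * Real.log (1 - a)) :=
      Real.continuous_mul_log.comp (continuous_const.sub continuous_id)
    fun_prop
  have hF' : ∀ x ∈ Set.Ioo (0:ℝ) 1, HasDerivAt F (H x - H b) x := by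
    intro x hx
    have hx1 : (1:ℝ) - x ≠ 0 := by have := hx.2; intro h; linarith [h]
    have hsub : HasDerivAt (fun a : ℝ => 1 - a) (-1) x := by
      exact (hasDerivAt_id x).const_sub (1:ℝ)
    have d1 : HasDerivAt (fun a : ℝ => a * Real.log a) (Real.log x + 1) x :=
      Real.hasDerivAt_mul_log (ne_of_gt hx.1)
    have d2 : HasDerivAt (fun a : ℝ => a * Real.log b) (Real.log b) x := by
      simpa using (hasDerivAt_id x).mul_const (Real.log b)
    have d3 : HasDerivAt (fun a : ℝ => (1 - a) * Real.log (1 - a))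
        ((Real.log (1 - x) + 1) * (-1)) x :=
      (Real.hasDerivAt_mul_log hx1).comp x hsub
    have d4 : HasDerivAt (fun a : ℝ => (1 - a) * Real.log (1 - b)) (-Real.log (1 - b)) x := by
      simpa using hsub.mul_const (Real.log (1 - b))
    have d5 : HasDerivAt (fun a : ℝ => 2 * (a - b)^2) (2 * (2 * (x - b))) x := by
      have : HasDerivAt (fun a : ℝ => (a - b)^2) (2 * (x - b)) x := by
        exact (((hasDerivAt_id' x).sub_const b).pow 2).congr_deriv (by norm_num)
      simpa using this.const_mul (2:ℝ)
    have := ((((d1.sub d2).add d3).sub d4).sub d5)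
    exact this.congr_deriv (by simp only [hHdef]; ring)
  have hFb : F b = 0 := by simp only [hF]; ring
  have hFa : 0 ≤ F a := by
    rcases le_total a b with hab | hab
    · have hanti : AntitoneOn F (Set.Icc 0 b) := by
        apply antitoneOn_of_deriv_nonpos (convex_Icc 0 b) hFcont.continuousOn
        · intro x hx
          rw [interior_Icc] at hx
          exact (hF' x ⟨hx.1, lt_trans hx.2 hb1⟩).differentiableAt.differentiableWithinAt
        · intro x hx
          rw [interior_Icc] at hx
          have hxI : x ∈ Set.Ioo (0:ℝ) 1 := ⟨hx.1, lt_trans hx.2 hb1⟩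
          rw [(hF' x hxI).deriv]
          have := myH_mono hxI ⟨hb0, hb1⟩ hx.2.le
          simpa [hHdef] using sub_nonpos.mpr this
      have := hanti ⟨ha.1, hab⟩ ⟨le_of_lt hb0, le_refl b⟩ hab
      linarith [hFb ▸ this]
    · have hmono : MonotoneOn F (Set.Icc b 1) := by
        apply monotoneOn_of_deriv_nonneg (convex_Icc b 1) hFcont.continuousOn
        · intro x hx
          rw [interior_Icc] at hx
          exact (hF' x ⟨lt_trans hb0 hx.1, hx.2⟩).differentiableAt.differentiableWithinAt
        · intro x hx
          rw [interior_Icc] at hx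
          have hxI : x ∈ Set.Ioo (0:ℝ) 1 := ⟨lt_trans hb0 hx.1, hx.2⟩
          rw [(hF' x hxI).deriv]
          have := myH_mono ⟨hb0, hb1⟩ hxI hx.1.le
          simpa [hHdef] using sub_nonneg.mpr this
      have := hmono ⟨le_refl b, hb1.le⟩ ⟨hab, ha.2⟩ hab
      linarith [hFb ▸ this]
  have e1 : a * Real.log (a / b) = a * Real.log a - a * Real.log b := by
    rcases eq_or_lt_of_le ha.1 with h | h
    · simp [← h]
    · rw [Real.log_div (ne_of_gt h) (ne_of_gt hb0)]; ring
  have e2 : (1 - a) * Real.log ((1 - a) / (1 - b)) =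
      (1 - a) * Real.log (1 - a) - (1 - a) * Real.log (1 - b) := by
    rcases eq_or_lt_of_le ha.2 with h | h
    · simp [h]
    · rw [Real.log_div (by intro hh; rw [sub_eq_zero] at hh; exact absurd hh.symm (ne_of_lt h))
        (ne_of_gt hb1')]
      ring
  rw [e1, e2]
  simp only [hF] at hFa
  linarith

private lemma log_sum_ineq {ι : Type*} (t : Finset ι) (q w : ι → ℝ)
    (hq : ∀ i ∈ t, 0 ≤ q i) (hw : ∀ i ∈ t, 0 < w i) (hwpos : 0 < ∑ i ∈ t, w i) :
    (∑ i ∈ t, q i) * Real.log ((∑ i ∈ t, q i) / (∑ i ∈ t, w i)) ≤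
      ∑ i ∈ t, q i * Real.log (q i / w i) := by
  set A := ∑ i ∈ t, q i with hA
  set B := ∑ i ∈ t, w i with hB
  have hBne : B ≠ 0 := ne_of_gt hwpos
  have h := Real.convexOn_mul_log.map_centerMass_le (t := t) (w := w)
    (p := fun i => q i / w i) (fun i hi => (hw i hi).le) hwpos
    (fun i hi => div_nonneg (hq i hi) (hw i hi).le)
  simp only [Finset.centerMass, smul_eq_mul, Function.comp] at h
  have e1 : ∑ i ∈ t, w i * (q i / w i) = A := by
    rw [hA]; exact Finset.sum_congr rfl fun i hi => mul_div_cancel₀ _ (ne_of_gt (hw i hi))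
  have e2 : ∑ i ∈ t, w i * (q i / w i * Real.log (q i / w i)) =
      ∑ i ∈ t, q i * Real.log (q i / w i) := by
    refine Finset.sum_congr rfl fun i hi => ?_
    rw [← mul_assoc, mul_div_cancel₀ _ (ne_of_gt (hw i hi))]
  rw [e1, e2] at h
  have h2 := mul_le_mul_of_nonneg_left h hwpos.le
  calc A * Real.log (A / B) = B * (B⁻¹ * A * Real.log (B⁻¹ * A)) := by
        rw [div_eq_inv_mul]; field_simp
    _ ≤ B * (B⁻¹ * ∑ i ∈ t, q i * Real.log (q i / w i)) := h2
    _ = ∑ i ∈ t, q i * Real.log (q i / w i) := by field_simp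

/-- Product-Bernoulli mass function on configurations `S ⊆ {0,…,p-1}`. -/
noncomputable def bernoulliMass {p : ℕ} (φ : Fin p → ℝ) (S : Finset (Fin p)) : ℝ :=
  (∏ j ∈ S, φ j) * ∏ j ∈ Sᶜ, (1 - φ j)

/-- Kullback–Leibler divergence, with the convention `0 · log 0 = 0`. -/
noncomputable def klDiv {p : ℕ} (q π : Finset (Fin p) → ℝ) : ℝ :=
  ∑ S : Finset (Fin p), q S * Real.log (q S / π S)

private lemma bernoulliMass_indicator {p : ℕ} (Sstar S : Finset (Fin p)) :
    bernoulliMass (fun j => if j ∈ Sstar then (1:ℝ) else 0) S =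
      if S = Sstar then 1 else 0 := by
  by_cases h : S = Sstar
  · subst h
    simp only [bernoulliMass, if_pos rfl]
    rw [Finset.prod_congr rfl (fun j hj => if_pos hj),
        Finset.prod_congr rfl (fun j hj => by
          rw [if_neg (Finset.mem_compl.mp hj)] :
            ∀ j ∈ Sᶜ, (1 - if j ∈ S then (1:ℝ) else 0) = 1 - 0)]
    simp
  · rw [if_neg h]
    by_cases hsub : S ⊆ Sstar
    · obtain ⟨j, hjSstar, hjS⟩ :=
        Finset.exists_of_ssubset (Finset.ssubset_iff_subset_ne.mpr ⟨hsub, h⟩)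
      have hjc : j ∈ Sᶜ := Finset.mem_compl.mpr hjS
      simp only [bernoulliMass]
      rw [Finset.prod_eq_zero hjc (by simp [hjSstar])]
      ring
    · obtain ⟨j, hjS, hjSstar⟩ := Finset.not_subset.mp hsub
      simp only [bernoulliMass]
      rw [Finset.prod_eq_zero hjS (by simp [hjSstar])]
      ring

theorem stmt_2 (p : ℕ) (Sstar : Finset (Fin p)) (π : Finset (Fin p) → ℝ)
    (hπsum : ∑ S : Finset (Fin p), π S = 1) (hπpos : ∀ S, 0 < π S)
    (ε : ℝ) (hε : ε ∈ Set.Ioo (0 : ℝ) 1) (hπstar : 1 - ε ≤ π Sstar)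
    (φhat : Fin p → ℝ) (hφhat : ∀ j, φhat j ∈ Set.Icc (0 : ℝ) 1)
    (hmin : ∀ φ : Fin p → ℝ, (∀ j, φ j ∈ Set.Icc (0 : ℝ) 1) →
      klDiv (bernoulliMass φhat) π ≤ klDiv (bernoulliMass φ) π) :
    1 - ε - Real.sqrt ((- Real.log (1 - ε)) / 2) ≤ bernoulliMass φhat Sstar := by
  obtain ⟨hε0, hε1⟩ := hε
  set q : Finset (Fin p) → ℝ := bernoulliMass φhat with hqdef
  have hq0 : ∀ S, 0 ≤ q S := fun S =>
    mul_nonneg (Finset.prod_nonneg fun j _ => (hφhat j).1)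
      (Finset.prod_nonneg fun j _ => by linarith [(hφhat j).2])
  have hqsum : ∑ S : Finset (Fin p), q S = 1 := by
    have h := Fintype.prod_add φhat (fun j => 1 - φhat j)
    have hone : ∀ j, φhat j + (1 - φhat j) = 1 := fun j => by ring
    simp only [hone, Finset.prod_const_one] at h
    simp only [hqdef, bernoulliMass]
    exact h.symm
  set a : ℝ := q Sstar with hadef
  set b : ℝ := π Sstar with hbdef
  have hb0 : 0 < b := hπpos Sstar
  have hsq : Real.sqrt ((- Real.log (1 - ε)) / 2) ≥ 0 := Real.sqrt_nonneg _
  by_cases hne : (Finset.univ.erase Sstar).Nonempty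
  · -- main case
    have hπerase : ∑ S ∈ Finset.univ.erase Sstar, π S = 1 - b := by
      have h := Finset.add_sum_erase Finset.univ π (Finset.mem_univ Sstar)
      rw [hπsum] at h; linarith
    have hqerase : ∑ S ∈ Finset.univ.erase Sstar, q S = 1 - a := by
      have h := Finset.add_sum_erase Finset.univ q (Finset.mem_univ Sstar)
      rw [hqsum] at h; linarith
    have hb1 : b < 1 := by
      have hpos : 0 < ∑ S ∈ Finset.univ.erase Sstar, π S :=
        Finset.sum_pos (fun i _ => hπpos i) hne
      linarith
    have ha1 : a ≤ 1 := by
      have := Finset.single_le_sum (fun i _ => hq0 i) (Finset.mem_univ Sstar)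
      rw [hqsum] at this; exact this
    -- KL upper bound via indicator
    set ind : Fin p → ℝ := fun j => if j ∈ Sstar then (1:ℝ) else 0 with hind
    have hindmem : ∀ j, ind j ∈ Set.Icc (0:ℝ) 1 := by
      intro j; by_cases h : j ∈ Sstar <;> simp [hind, h]
    have hklind : klDiv (bernoulliMass ind) π = - Real.log b := by
      unfold klDiv
      rw [Finset.sum_eq_single_of_mem Sstar (Finset.mem_univ Sstar)]
      · rw [bernoulliMass_indicator, if_pos rfl, one_mul, ← hbdef, one_div,
          Real.log_inv]
      · intro S _ hS
        rw [bernoulliMass_indicator, if_neg hS, zero_mul]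
    have hlogb : - Real.log b ≤ - Real.log (1 - ε) := by
      have := Real.log_le_log (by linarith) hπstar
      linarith
    have hklub : klDiv q π ≤ - Real.log (1 - ε) :=
      le_trans (hmin ind hindmem) (by rw [hklind]; exact hlogb)
    -- KL lower bound
    have hsplit : klDiv q π = a * Real.log (a / b) +
        ∑ S ∈ Finset.univ.erase Sstar, q S * Real.log (q S / π S) :=
      (Finset.add_sum_erase Finset.univ (fun S => q S * Real.log (q S / π S))
        (Finset.mem_univ Sstar)).symm
    have hjensen := log_sum_ineq (Finset.univ.erase Sstar) q π
      (fun i _ => hq0 i) (fun i _ => hπpos i) (by rw [hπerase]; linarith)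
    rw [hqerase, hπerase] at hjensen
    have hkl2 : a * Real.log (a / b) + (1 - a) * Real.log ((1 - a) / (1 - b)) ≤
        klDiv q π := by rw [hsplit]; linarith
    have hpin := pinsker_bin ⟨hb0, hb1⟩ (a := a) ⟨hq0 Sstar, ha1⟩
    have h2 : (a - b)^2 ≤ (- Real.log (1 - ε)) / 2 := by linarith
    have h3 : b - a ≤ Real.sqrt ((- Real.log (1 - ε)) / 2) := by
      calc b - a ≤ |a - b| := by rw [abs_sub_comm]; exact le_abs_self _
        _ = Real.sqrt ((a - b)^2) := (Real.sqrt_sq_eq_abs _).symm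
        _ ≤ _ := Real.sqrt_le_sqrt h2
    have : 1 - ε ≤ b := hπstar
    linarith
  · -- degenerate case: only one configuration
    have ha : a = 1 := by
      have h := Finset.add_sum_erase Finset.univ q (Finset.mem_univ Sstar)
      rw [hqsum, Finset.not_nonempty_iff_eq_empty.mp hne, Finset.sum_empty, add_zero] at h
      exact h
    rw [← hadef] at *
    linarith
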